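/- Let φ(x) = ax² + bx + c (degree at most 2) and ψ(x) = dx + e (degree at most 1), and set d_n := dq^n + a[n]_q. Let (Q_n)_{n≥0} be a simple set of polynomials (deg Q_n = n) with leading coefficients a_n ≠ 0, and for n ≥ 0 define R_{n+1} := φ·(D*_{q,ω}Q_n) + q·ψ·Q_n and R_0 := 1. Then R_{n+1}(x) = a_n·q^{1−n}·d_n·x^{n+1} + (terms of degree ≤ n) for every n ≥ 0; consequently (R_n)_{n≥0} is a simple set of polynomials if and only if d_n ≠ 0 for all n ≥ 0, i.e., if and only if (φ, ψ) is a (q,ω)-admissible pair. -/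

import Mathlib

open Polynomial

noncomputable section

namespace HahnOPSPaper

/-- The algebraic dual of the space of complex polynomials. -/
abbrev PDual : Type := Module.Dual ℂ (Polynomial ℂ)

/-- Left multiplication of a functional by a polynomial: `⟨φu, f⟩ = ⟨u, φf⟩`. -/
def pMul (φ : Polynomial ℂ) (u : PDual) : PDual := u ∘ₗ LinearMap.mulLeft ℂ φ

/-- Distributional derivative: `⟨Du, f⟩ = -⟨u, f'⟩`. -/
def dDeriv (u : PDual) : PDual :=
  -(u ∘ₗ (Polynomial.derivative : Polynomial ℂ →ₗ[ℂ] Polynomial ℂ))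

/-- The q-bracket `[n]_q = 1 + q + ⋯ + q^(n-1)`. -/
def qBracket (q : ℂ) (n : ℕ) : ℂ := ∑ i ∈ Finset.range n, q ^ i

/-- q-factorial `[n]_q!`. -/
def qFact (q : ℂ) (n : ℕ) : ℂ := ∏ i ∈ Finset.range n, qBracket q (i + 1)

/-- `D` is Hahn's operator `D_{q,ω}`, i.e. the (unique, for `(q,ω) ≠ (1,0)`) linear operator
with `((q-1)x + ω)·(Df)(x) = f(qx+ω) - f(x)`. -/
def IsHahn (q ω : ℂ) (D : Polynomial ℂ →ₗ[ℂ] Polynomial ℂ) : Prop :=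
  ∀ f : Polynomial ℂ, (C (q - 1) * X + C ω) * D f = f.comp (C q * X + C ω) - f

/-- The operator `(L_{q,ω} f)(x) = f(qx + ω)`. -/
def Lop (q ω : ℂ) : Polynomial ℂ →ₗ[ℂ] Polynomial ℂ :=
  (aeval (C q * X + C ω)).toLinearMap

/-- The distributional Hahn operator `D_{q,ω}` on the dual, built from the ordinary operator
`D*_{q,ω} = D_{1/q,-ω/q}`: `⟨D_{q,ω}u, f⟩ = -q⁻¹·⟨u, D*_{q,ω}f⟩`. -/
def hahnDual (q : ℂ) (Dstar : Polynomial ℂ →ₗ[ℂ] Polynomial ℂ) (u : PDual) : PDual :=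
  (-q⁻¹) • (u ∘ₗ Dstar)

/-- The distributional operator `L_{q,ω}`: `⟨L_{q,ω}u, f⟩ = q⁻¹·⟨u, L_{1/q,-ω/q}f⟩`. -/
def LDual (q ω : ℂ) (u : PDual) : PDual := q⁻¹ • (u ∘ₗ Lop q⁻¹ (-ω / q))

/-- A functional is regular if it admits a monic orthogonal polynomial sequence. -/
def IsRegularFunc (u : PDual) : Prop :=
  ∃ P : ℕ → Polynomial ℂ, (∀ n, (P n).Monic ∧ (P n).natDegree = n) ∧
    (∀ m n, m ≠ n → u (P m * P n) = 0) ∧ (∀ n, u (P n ^ 2) ≠ 0)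

/-- `P` is the monic OPS with respect to `u`. -/
def IsMonicOPS (u : PDual) (P : ℕ → Polynomial ℂ) : Prop :=
  (∀ n, (P n).Monic ∧ (P n).natDegree = n) ∧
    (∀ m n, m ≠ n → u (P m * P n) = 0) ∧ (∀ n, u (P n ^ 2) ≠ 0)

/-- Continuous case: `d_n = d + a·n`. -/
def ddC (a d : ℂ) (n : ℕ) : ℂ := d + a * n

/-- Continuous case: `e_n = e + b·n`. -/
def eeC (b e : ℂ) (n : ℕ) : ℂ := e + b * n

/-- Continuous case: `β_n = n·e_{n-1}/d_{2n-2} - (n+1)·e_n/d_{2n}`. -/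
def betaC (a b d e : ℂ) (n : ℕ) : ℂ :=
  n * eeC b e (n - 1) / ddC a d (2 * n - 2) - (n + 1) * eeC b e n / ddC a d (2 * n)

/-- Continuous case: `γ_{n+1} = -((n+1)·d_{n-1}/(d_{2n-1}·d_{2n+1}))·φ(-e_n/d_{2n})`. -/
def gammaC (a b d e : ℂ) (φ : Polynomial ℂ) (n : ℕ) : ℂ :=
  -((n + 1) * ddC a d (n - 1) / (ddC a d (2 * n - 1) * ddC a d (2 * n + 1))) *
    φ.eval (-(eeC b e n) / ddC a d (2 * n))

/-- `d_n = d·q^n + a·[n]_q`. -/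
def ddQ (q a d : ℂ) (n : ℕ) : ℂ := d * q ^ n + a * qBracket q n

/-- `e_n = e·q^n + (ω·d_n + b)·[n]_q`. -/
def eeQ (q ω a b d e : ℂ) (n : ℕ) : ℂ :=
  e * q ^ n + (ω * ddQ q a d n + b) * qBracket q n

/-- `β_n = ω[n]_q + [n]_q·e_{n-1}/d_{2n-2} - [n+1]_q·e_n/d_{2n}`. -/
def betaQ (q ω a b d e : ℂ) (n : ℕ) : ℂ :=
  ω * qBracket q n + qBracket q n * eeQ q ω a b d e (n - 1) / ddQ q a d (2 * n - 2)
    - qBracket q (n + 1) * eeQ q ω a b d e n / ddQ q a d (2 * n)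

/-- `γ_{n+1} = -(q^n·[n+1]_q·d_{n-1}/(d_{2n-1}·d_{2n+1}))·φ(-e_n/d_{2n})`. -/
def gammaQ (q ω a b d e : ℂ) (φ : Polynomial ℂ) (n : ℕ) : ℂ :=
  -(q ^ n * qBracket q (n + 1) * ddQ q a d (n - 1) /
      (ddQ q a d (2 * n - 1) * ddQ q a d (2 * n + 1))) *
    φ.eval (-(eeQ q ω a b d e n) / ddQ q a d (2 * n))

/-- `Φ(x;n) = ∏_{j=1}^n φ(q^j x + ω[j]_q)`. -/
def PhiQ (q ω : ℂ) (φ : Polynomial ℂ) (n : ℕ) : Polynomial ℂ :=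
  ∏ j ∈ Finset.range n, φ.comp (C (q ^ (j + 1)) * X + C (ω * qBracket q (j + 1)))

/-- `k_n = q^{n(n-3)/2}·∏_{j=0}^{n-1} d_{n+j-1}⁻¹`. -/
def kQ (q a d : ℂ) (n : ℕ) : ℂ :=
  q ^ (((n : ℤ) * ((n : ℤ) - 3)) / 2) * ∏ j ∈ Finset.range n, (ddQ q a d (n + j - 1))⁻¹

lemma qBracket_succ (q : ℂ) (n : ℕ) : qBracket q (n+1) = qBracket q n + q ^ n := by
  simp [qBracket, Finset.sum_range_succ]

lemma qBracket_inv (q : ℂ) (hq0 : q ≠ 0) (n : ℕ) :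
    qBracket q⁻¹ n = q ^ ((1:ℤ) - n) * qBracket q n := by
  induction n with
  | zero => simp [qBracket]
  | succ n ih =>
    have hgs : q * qBracket q n + 1 = qBracket q n + q ^ n := by
      have h := geom_sum_mul q n
      unfold qBracket
      linear_combination h
    have hpow : (q:ℂ) ^ ((1:ℤ) - (((n:ℕ)+1:ℕ):ℤ)) * q = q ^ ((1:ℤ) - (n:ℤ)) := by
      have h := zpow_add₀ hq0 ((1:ℤ) - (((n:ℕ)+1:ℕ):ℤ)) 1
      rw [zpow_one] at h
      rw [← h]; congr 1; push_cast; ring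
    have hinv : (q⁻¹:ℂ) ^ n = q ^ ((1:ℤ) - (((n:ℕ)+1:ℕ):ℤ)) * 1 := by
      rw [mul_one, inv_pow, ← zpow_natCast, ← zpow_neg]
      congr 1
      push_cast; ring
    rw [qBracket_succ, qBracket_succ, ih, hinv]
    linear_combination (-(qBracket q n)) * hpow + (q:ℂ) ^ ((1:ℤ) - (((n:ℕ)+1:ℕ):ℤ)) * hgs

lemma hahn_key (q ω : ℂ) (hq0 : q ≠ 0) (hqω : q ≠ 1 ∨ ω ≠ 0)
    (hqr : ∀ n : ℕ, 0 < n → q ^ n = 1 → q = 1)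
    (Dstar : Polynomial ℂ →ₗ[ℂ] Polynomial ℂ) (hDstar : IsHahn q⁻¹ (-ω / q) Dstar)
    (f : Polynomial ℂ) (n : ℕ) (hf : f.degree = (n : WithBot ℕ)) :
    (∀ k, n ≤ k → (Dstar f).coeff k = 0) ∧
      (Dstar f).coeff (n - 1) = f.leadingCoeff * qBracket q⁻¹ n := by
  have hDf := hDstar f
  set g := Dstar f with hg
  by_cases hn0 : n = 0
  · subst hn0
    have hfC : f = C (f.coeff 0) := eq_C_of_degree_le_zero (le_of_eq hf)
    have hP : f.comp (C q⁻¹ * X + C (-ω/q)) - f = 0 := by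
      conv_lhs => rw [hfC]
      simp
    have hm : (C (q⁻¹ - 1) * X + C (-ω / q)) ≠ 0 := by
      intro h
      have h1 : q⁻¹ - 1 = 0 := by
        have := congrArg (fun p => Polynomial.coeff p 1) h; simpa using this
      have h0 : -ω/q = 0 := by
        have := congrArg (fun p => Polynomial.coeff p 0) h; simpa using this
      rcases hqω with h'|h'
      · exact h' (inv_eq_one.mp (sub_eq_zero.mp h1))
      · apply h'; field_simp at h0; simpa using h0
    have hg0 : g = 0 := by
      rw [hP] at hDf
      exact (mul_eq_zero.mp hDf).resolve_left hm
    simp [hg0, qBracket]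
  have hn1 : 1 ≤ n := Nat.one_le_iff_ne_zero.mpr hn0
  have hfnd : f.natDegree = n := natDegree_eq_of_degree_eq_some hf
  have hf0 : f ≠ 0 := fun h => by simp [h] at hf
  have hflc : f.leadingCoeff ≠ 0 := leadingCoeff_ne_zero.mpr hf0
  by_cases hq1 : q = 1
  · have hω : ω ≠ 0 := hqω.resolve_left (fun h => h hq1)
    subst hq1
    have hDf' : C (-ω) * g = taylor (-ω) f - f := by
      rw [taylor_apply]
      simpa using hDf
    have hco : ∀ k, (-ω) * g.coeff k = ((taylor (-ω)) f).coeff k - f.coeff k := by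
      intro k
      have := congrArg (fun p => Polynomial.coeff p k) hDf'
      simpa [coeff_C_mul] using this
    constructor
    · intro k hk
      have hhd : Polynomial.hasseDeriv k f = C (f.coeff k) := by
        ext i
        rw [hasseDeriv_coeff, coeff_C]
        cases i with
        | zero => simp
        | succ i =>
          have : f.coeff (i + 1 + k) = 0 :=
            coeff_eq_zero_of_natDegree_lt (by omega)
          simp [this]
      have ht : ((taylor (-ω)) f).coeff k = f.coeff k := by
        rw [taylor_coeff, hhd, eval_C]
      have := hco k
      rw [ht, sub_self] at this
      exact (mul_eq_zero.mp this).resolve_left (neg_ne_zero.mpr hω)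
    · have hhd : Polynomial.hasseDeriv (n-1) f
          = C (f.coeff (n-1)) + C ((n:ℂ) * f.coeff n) * X := by
        ext i
        rw [hasseDeriv_coeff]
        match i with
        | 0 => simp
        | 1 =>
          have h1 : 1 + (n - 1) = n := by omega
          rw [h1]
          have h2 : n.choose (n-1) = n := by
            rw [Nat.choose_symm hn1, Nat.choose_one_right]
          simp [h2]
        | (i+2) =>
          have : f.coeff (i + 2 + (n-1)) = 0 :=
            coeff_eq_zero_of_natDegree_lt (by omega)
          simp [this, coeff_C, coeff_X]
      have ht : ((taylor (-ω)) f).coeff (n-1)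
          = f.coeff (n-1) + (n:ℂ) * f.coeff n * (-ω) := by
        rw [taylor_coeff, hhd]
        simp
      have h := hco (n-1)
      rw [ht] at h
      have hq1 : qBracket (1:ℂ)⁻¹ n = (n:ℂ) := by simp [qBracket]
      have hlc : f.leadingCoeff = f.coeff n := by rw [leadingCoeff, hfnd]
      have hωn : (-ω) ≠ 0 := neg_ne_zero.mpr hω
      have hval : g.coeff (n-1) = (n:ℂ) * f.coeff n := by
        apply mul_left_cancel₀ hωn
        linear_combination h
      rw [hq1, hlc, hval]; ring
  · -- q ≠ 1
    have hqi1 : q⁻¹ ≠ 1 := fun h => hq1 (by rw [← inv_inv q, h, inv_one])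
    have hqi0 : q⁻¹ ≠ 0 := inv_ne_zero hq0
    set ℓ : Polynomial ℂ := C q⁻¹ * X + C (-ω/q) with hℓ
    have hℓnd : ℓ.natDegree = 1 := natDegree_linear hqi0
    have hℓlc : ℓ.leadingCoeff = q⁻¹ := leadingCoeff_linear hqi0
    set E := f.comp ℓ with hE
    have hEnd : E.natDegree = n := by rw [hE, natDegree_comp, hℓnd, hfnd, mul_one]
    have hElc : E.leadingCoeff = f.leadingCoeff * (q⁻¹)^n := by
      rw [hE, leadingCoeff_comp (by rw [hℓnd]; norm_num), hℓlc, hfnd]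
    have hPn : (E - f).coeff n = f.leadingCoeff * ((q⁻¹)^n - 1) := by
      rw [coeff_sub]
      have h1 : E.coeff n = E.leadingCoeff := by rw [leadingCoeff, hEnd]
      have h2 : f.coeff n = f.leadingCoeff := by rw [leadingCoeff, hfnd]
      rw [h1, h2, hElc]; ring
    have hne : (q⁻¹)^n - 1 ≠ 0 := by
      intro h
      have h' : (q⁻¹)^n = 1 := sub_eq_zero.mp h
      have : q ^ n = 1 := by
        rw [inv_pow] at h'
        exact inv_eq_one.mp h'
      exact hq1 (hqr n hn1 this)
    have hPcne : (E - f).coeff n ≠ 0 := by rw [hPn]; exact mul_ne_zero hflc hne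
    have hPdegle : (E - f).degree ≤ n := by
      refine (degree_sub_le E f).trans (max_le ?_ (le_of_eq hf))
      exact le_trans degree_le_natDegree (by rw [hEnd])
    have hPdeg : (E - f).degree = n := le_antisymm hPdegle (le_degree_of_ne_zero hPcne)
    have hPnd : (E - f).natDegree = n := natDegree_eq_of_degree_eq_some hPdeg
    have hPne : E - f ≠ 0 := fun h => hPcne (by rw [h]; simp)
    have hmne : (C (q⁻¹ - 1) * X + C (-ω / q)) ≠ 0 := by
      intro h
      have h1 : q⁻¹ - 1 = 0 := by
        have := congrArg (fun p => Polynomial.coeff p 1) h; simpa using this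
      exact hqi1 (sub_eq_zero.mp h1)
    have hgne : g ≠ 0 := by
      intro h
      rw [h, mul_zero] at hDf
      exact hPne hDf.symm
    have hgnd : g.natDegree = n - 1 := by
      have := natDegree_mul hmne hgne
      rw [hDf, hPnd, natDegree_linear (sub_ne_zero.mpr hqi1)] at this
      omega
    constructor
    · intro k hk
      exact coeff_eq_zero_of_natDegree_lt (by omega)
    · have hglc : g.coeff (n-1) = g.leadingCoeff := by rw [leadingCoeff, hgnd]
      have hlm := leadingCoeff_mul (C (q⁻¹ - 1) * X + C (-ω / q)) g
      rw [hDf, leadingCoeff_linear (sub_ne_zero.mpr hqi1)] at hlm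
      have hPlc : (E - f).leadingCoeff = f.leadingCoeff * ((q⁻¹)^n - 1) := by
        rw [leadingCoeff, hPnd, hPn]
      rw [hPlc] at hlm
      have hqB : qBracket q⁻¹ n = ((q⁻¹)^n - 1)/(q⁻¹ - 1) := geom_sum_eq hqi1 n
      have hd : q⁻¹ - 1 ≠ 0 := sub_ne_zero.mpr hqi1
      rw [hglc, hqB, ← mul_div_assoc]
      exact eq_div_of_mul_eq hd (by linear_combination -hlm)

theorem stmt_8 (q ω : ℂ) (hq0 : q ≠ 0) (hqω : q ≠ 1 ∨ ω ≠ 0)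
    (hqr : ∀ n : ℕ, 0 < n → q ^ n = 1 → q = 1)
    (a b c d e : ℂ) (φ ψ : Polynomial ℂ)
    (hφ : φ = C a * X ^ 2 + C b * X + C c) (hψ : ψ = C d * X + C e)
    (Dstar : Polynomial ℂ →ₗ[ℂ] Polynomial ℂ) (hDstar : IsHahn q⁻¹ (-ω / q) Dstar)
    (Q : ℕ → Polynomial ℂ) (hQ : ∀ n : ℕ, (Q n).degree = (n : WithBot ℕ))
    (R : ℕ → Polynomial ℂ) (hR0 : R 0 = 1)
    (hR : ∀ n : ℕ, R (n + 1) = φ * Dstar (Q n) + C q * (ψ * Q n)) :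
    (∀ n : ℕ,
      (R (n + 1) -
        C ((Q n).leadingCoeff * q ^ ((1 : ℤ) - (n : ℤ)) * ddQ q a d n) * X ^ (n + 1)).degree
          ≤ (n : WithBot ℕ)) ∧
    ((∀ n : ℕ, (R n).degree = (n : WithBot ℕ)) ↔ ∀ n : ℕ, ddQ q a d n ≠ 0) := by
  have hα : ∀ n : ℕ, (Q n).leadingCoeff ≠ 0 := fun n =>
    leadingCoeff_ne_zero.mpr (fun h => by have := hQ n; simp [h] at this)
  have hQnd : ∀ n, (Q n).natDegree = n := fun n => natDegree_eq_of_degree_eq_some (hQ n)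
  have key := fun n => hahn_key q ω hq0 hqω hqr Dstar hDstar (Q n) n (hQ n)
  have hcoeff : ∀ n k, n + 1 ≤ k → (R (n+1)).coeff k =
      if k = n + 1 then (Q n).leadingCoeff * q ^ ((1:ℤ) - (n:ℤ)) * ddQ q a d n else 0 := by
    intro n k hk
    obtain ⟨hka, hkb⟩ := key n
    set g := Dstar (Q n) with hgdef
    have hexp : R (n+1) = C a * (g * X^2) + C b * (g * X^1) + C c * g
        + C q * (C d * (Q n * X^1) + C e * Q n) := by
      rw [hR n, hφ, hψ, ← hgdef]; ring
    rw [hexp]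
    simp only [coeff_add, coeff_C_mul, coeff_mul_X_pow']
    have hQk : ∀ j, n + 1 ≤ j → (Q n).coeff j = 0 := fun j hj =>
      coeff_eq_zero_of_natDegree_lt (by rw [hQnd]; omega)
    by_cases hk1 : k = n + 1
    · subst hk1
      rw [if_pos rfl]
      have e1 : g.coeff (n+1) = 0 := hka _ (by omega)
      have e2 : (if 1 ≤ n+1 then g.coeff (n+1-1) else 0) = 0 := by
        rw [if_pos (by omega)]
        simpa using hka n le_rfl
      have e3 : (if 2 ≤ n+1 then g.coeff (n+1-2) else 0)
          = (Q n).leadingCoeff * qBracket q⁻¹ n := by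
        cases n with
        | zero => simp [qBracket]
        | succ m =>
          rw [if_pos (by omega)]
          simpa using hkb
      have e4 : (if 1 ≤ n+1 then (Q n).coeff (n+1-1) else 0) = (Q n).leadingCoeff := by
        rw [if_pos (by omega)]
        simp [leadingCoeff, hQnd n]
      have e5 : (Q n).coeff (n+1) = 0 := hQk _ (by omega)
      rw [e1, e2, e3, e4, e5]
      have hB := qBracket_inv q hq0 n
      have hz : q ^ ((1:ℤ) - (n:ℤ)) * q ^ (n:ℕ) = q := by
        rw [← zpow_natCast q n, ← zpow_add₀ hq0]
        norm_num
      unfold ddQ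
      rw [hB]
      linear_combination (-(Q n).leadingCoeff * d) * hz
    · rw [if_neg hk1]
      have e1 : g.coeff k = 0 := hka _ (by omega)
      have e2 : g.coeff (k-1) = 0 := hka _ (by omega)
      have e3 : g.coeff (k-2) = 0 := hka _ (by omega)
      have e4 : (Q n).coeff k = 0 := hQk _ (by omega)
      have e5 : (Q n).coeff (k-1) = 0 := hQk _ (by omega)
      split_ifs <;> simp [e1, e2, e3, e4, e5]
  have part1 : ∀ n : ℕ,
      (R (n + 1) -
        C ((Q n).leadingCoeff * q ^ ((1 : ℤ) - (n : ℤ)) * ddQ q a d n) * X ^ (n + 1)).degree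
          ≤ (n : WithBot ℕ) := by
    intro n
    rw [degree_le_iff_coeff_zero]
    intro k hkk
    have hk : n + 1 ≤ k := by
      rw [Nat.cast_lt] at hkk
      omega
    rw [coeff_sub, coeff_C_mul, coeff_X_pow, hcoeff n k hk]
    by_cases h : k = n+1
    · subst h; simp
    · rw [if_neg h, if_neg h]
      simp
  refine ⟨part1, ?_, ?_⟩
  · intro hdeg n
    intro hdn
    have h1 := part1 n
    rw [hdn, mul_zero, map_zero, zero_mul, sub_zero, hdeg (n+1)] at h1
    rw [Nat.cast_le] at h1
    omega
  · intro hd n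
    cases n with
    | zero =>
      rw [hR0]
      exact degree_one
    | succ n =>
      have h1 := part1 n
      set c' := (Q n).leadingCoeff * q ^ ((1:ℤ) - (n:ℤ)) * ddQ q a d n with hc'
      have hc'ne : c' ≠ 0 :=
        mul_ne_zero (mul_ne_zero (hα n) (zpow_ne_zero _ hq0)) (hd n)
      have hRe : R (n+1) = (R (n+1) - C c' * X^(n+1)) + C c' * X^(n+1) := by ring
      rw [hRe, degree_add_eq_right_of_degree_lt, degree_C_mul_X_pow _ hc'ne]
      rw [degree_C_mul_X_pow _ hc'ne]
      refine lt_of_le_of_lt h1 ?_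
      exact_mod_cast Nat.lt_succ_self n


end HahnOPSPaper
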